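/- arXiv:1303.4015 — 3 statements merged into one kernel-verified Lean document; each statement's English description precedes it below -/
import Mathlib

section
/- Let L_{t-1} = Σ_i Σ_{l≠y_i} (1/m_{y_i}) exp(f_{t-1}(i,l) − f_{t-1}(i,y_i)) and suppose the weak classifier h_t satisfies the edge condition D_t · 1_{h_t} ≤ D_t · U_{δ_t} where U_{δ_t}(i,l) = (1−δ_t)/K + δ_t·1[l=y_i]. With A_+ = Σ_{i: h_t(i)=y_i} L_{t-1}(i) and A_− = Σ_{i: h_t(i)≠y_i} (1/m_{y_i}) exp(f_{t-1}(i,h_t(i)) − f_{t-1}(i,y_i)), the edge condition implies A_+ − A_− ≥ δ_t L_{t-1}. -/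
/-- The edge condition D_t · 1_{h_t} ≤ D_t · U_{δ_t} implies
A₊ − A₋ ≥ δ_t L_{t−1}. -/
theorem stmt_8 {K m : ℕ} (hK : 0 < K)
    (y : Fin m → Fin K) (f : Fin m → Fin K → ℝ) (h : Fin m → Fin K)
    (δ : ℝ) (hδ : δ ∈ Set.Icc (0:ℝ) 1)
    (w : Fin m → ℝ)
    (hw : ∀ i, w i = 1 / ((Finset.univ.filter (fun i' => y i' = y i)).card : ℝ))
    (L : Fin m → ℝ)
    (hL : ∀ i, L i = ∑ l ∈ Finset.univ.filter (fun l => l ≠ y i),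
        w i * Real.exp (f i l - f i (y i)))
    (D : Fin m → Fin K → ℝ)
    (hD : ∀ i l, D i l = if l = y i then -(L i) else w i * Real.exp (f i l - f i (y i)))
    (hedge : ∑ i, ∑ l, D i l * (if h i = l then (1:ℝ) else 0) ≤
      ∑ i, ∑ l, D i l * ((1 - δ) / K + if l = y i then δ else 0)) :
    δ * (∑ i, L i) ≤
      (∑ i ∈ Finset.univ.filter (fun i => h i = y i), L i) -
      (∑ i ∈ Finset.univ.filter (fun i => h i ≠ y i),
        w i * Real.exp (f i (h i) - f i (y i))) := by
  -- off-diagonal sum equals L i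
  have hoff : ∀ i, ∑ l ∈ Finset.univ.filter (fun l => l ≠ y i), D i l = L i := by
    intro i
    rw [hL i]
    refine Finset.sum_congr rfl ?_
    intro l hl
    simp only [Finset.mem_filter] at hl
    rw [hD i l, if_neg hl.2]
  -- each row of D sums to zero
  have hrow : ∀ i, ∑ l, D i l = 0 := by
    intro i
    rw [← Finset.sum_filter_add_sum_filter_not Finset.univ (fun l => l = y i) (D i)]
    have h1 : Finset.univ.filter (fun l => l = y i) = {y i} := by
      ext l; simp
    have h2 : (Finset.univ.filter (fun l => ¬ l = y i)) =
        Finset.univ.filter (fun l => l ≠ y i) := rfl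
    rw [h1, Finset.sum_singleton, hD i (y i), if_pos rfl, h2, hoff i]
    ring
  -- LHS of hedge
  have hLHS : (∑ i, ∑ l, D i l * (if h i = l then (1:ℝ) else 0)) =
      -(∑ i ∈ Finset.univ.filter (fun i => h i = y i), L i) +
      (∑ i ∈ Finset.univ.filter (fun i => h i ≠ y i),
        w i * Real.exp (f i (h i) - f i (y i))) := by
    have hinner : ∀ i, ∑ l, D i l * (if h i = l then (1:ℝ) else 0) = D i (h i) := by
      intro i
      rw [Finset.sum_eq_single (h i)]
      · simp
      · intro l _ hne
        simp [Ne.symm hne]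
      · simp
    calc (∑ i, ∑ l, D i l * (if h i = l then (1:ℝ) else 0)) = ∑ i, D i (h i) := by
          exact Finset.sum_congr rfl fun i _ => hinner i
      _ = _ := by
          rw [← Finset.sum_filter_add_sum_filter_not Finset.univ (fun i => h i = y i)
            (fun i => D i (h i))]
          congr 1
          · rw [← Finset.sum_neg_distrib]
            refine Finset.sum_congr rfl ?_
            intro i hi
            simp only [Finset.mem_filter] at hi
            rw [hD, if_pos hi.2]
          · refine Finset.sum_congr rfl ?_
            intro i hi
            simp only [Finset.mem_filter] at hi
            rw [hD, if_neg hi.2]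
  -- RHS of hedge
  have hRHS : (∑ i, ∑ l, D i l * ((1 - δ) / K + if l = y i then δ else 0)) =
      -(δ * ∑ i, L i) := by
    have hinner : ∀ i, ∑ l, D i l * ((1 - δ) / K + if l = y i then δ else 0)
        = -(δ * L i) := by
      intro i
      have : ∀ l, D i l * ((1 - δ) / K + if l = y i then δ else 0)
          = D i l * ((1 - δ) / K) + D i l * (if l = y i then δ else 0) := by
        intro l; ring
      rw [Finset.sum_congr rfl (fun l _ => this l), Finset.sum_add_distrib,
        ← Finset.sum_mul, hrow i, zero_mul, zero_add]
      rw [Finset.sum_eq_single (y i)]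
      · rw [hD, if_pos rfl]; simp; ring
      · intro l _ hne; simp [hne]
      · simp
    rw [Finset.sum_congr rfl (fun i _ => hinner i), Finset.sum_neg_distrib,
      ← Finset.mul_sum]
  rw [hLHS, hRHS] at hedge
  linarith
end

section
/- Under the edge condition of the previous setup, updating scores by f_t(i,l) = f_{t-1}(i,l) + α·1[h_t(i)=l] with α > 0 yields L_t ≤ (((1−δ_t)/2)e^{α} + ((1+δ_t)/2)e^{−α}) · L_{t-1}, i.e., the exponential loss drops by at least the factor 1 − ((e^{α} − e^{−α})/2)δ_t + ((e^{α} + e^{−α} − 2)/2). -/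
/-- Under the edge condition, updating scores by
f_t(i,l) = f_{t−1}(i,l) + α·1[h_t(i)=l] with α > 0 yields
L_t ≤ (((1−δ)/2)e^α + ((1+δ)/2)e^{−α})·L_{t−1}. -/
theorem stmt_9 {K m : ℕ} (hK : 0 < K)
    (y : Fin m → Fin K) (f : Fin m → Fin K → ℝ) (h : Fin m → Fin K)
    (α δ : ℝ) (hα : 0 < α) (hδ : δ ∈ Set.Icc (0:ℝ) 1)
    (w : Fin m → ℝ)
    (hw : ∀ i, w i = 1 / ((Finset.univ.filter (fun i' => y i' = y i)).card : ℝ))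
    (L : Fin m → ℝ)
    (hL : ∀ i, L i = ∑ l ∈ Finset.univ.filter (fun l => l ≠ y i),
        w i * Real.exp (f i l - f i (y i)))
    (D : Fin m → Fin K → ℝ)
    (hD : ∀ i l, D i l = if l = y i then -(L i) else w i * Real.exp (f i l - f i (y i)))
    (hedge : ∑ i, ∑ l, D i l * (if h i = l then (1:ℝ) else 0) ≤
      ∑ i, ∑ l, D i l * ((1 - δ) / K + if l = y i then δ else 0))
    (g : Fin m → Fin K → ℝ)
    (hg : ∀ i l, g i l = f i l + α * (if h i = l then (1:ℝ) else 0)) :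
    (∑ i, ∑ l ∈ Finset.univ.filter (fun l => l ≠ y i),
        w i * Real.exp (g i l - g i (y i))) ≤
      (((1 - δ) / 2) * Real.exp α + ((1 + δ) / 2) * Real.exp (-α)) * ∑ i, L i := by
  obtain ⟨hδ0, hδ1⟩ := hδ
  set Ea := Real.exp α with hEa
  set Eb := Real.exp (-α) with hEb
  have hEb_pos : 0 < Eb := Real.exp_pos _
  have hEa_ge : 1 ≤ Ea := Real.one_le_exp hα.le
  have hprod : Ea * Eb = 1 := by rw [hEa, hEb, ← Real.exp_add]; simp
  have hcosh : 2 ≤ Ea + Eb := by nlinarith [sq_nonneg (Ea - 1)]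
  set Ai : Fin m → ℝ := fun i => if h i = y i then L i else 0 with hAi
  set Bi : Fin m → ℝ := fun i =>
    if h i = y i then 0 else w i * Real.exp (f i (h i) - f i (y i)) with hBi
  have hw_nonneg : ∀ i, 0 ≤ w i := fun i => by rw [hw]; positivity
  have hL_nonneg : ∀ i, 0 ≤ L i := fun i => by
    rw [hL]
    exact Finset.sum_nonneg fun l _ => mul_nonneg (hw_nonneg i) (Real.exp_pos _).le
  -- A_i + B_i ≤ L_i
  have hAB_le : ∀ i, Ai i + Bi i ≤ L i := by
    intro i
    by_cases hc : h i = y i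
    · simp only [hAi, hBi, if_pos hc, add_zero, le_refl]
    · simp only [hAi, hBi, if_neg hc, zero_add]
      rw [hL]
      have hmem : h i ∈ Finset.univ.filter (fun l => l ≠ y i) :=
        Finset.mem_filter.mpr ⟨Finset.mem_univ _, hc⟩
      exact Finset.single_le_sum (f := fun l => w i * Real.exp (f i l - f i (y i)))
        (fun l _ => mul_nonneg (hw_nonneg i) (Real.exp_pos _).le) hmem
  -- new loss per example
  have hT : ∀ i, (∑ l ∈ Finset.univ.filter (fun l => l ≠ y i),
        w i * Real.exp (g i l - g i (y i)))
      = Eb * Ai i + Ea * Bi i + (L i - Ai i - Bi i) := by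
    intro i
    by_cases hc : h i = y i
    · have hstep : ∀ l ∈ Finset.univ.filter (fun l => l ≠ y i),
          w i * Real.exp (g i l - g i (y i))
            = Eb * (w i * Real.exp (f i l - f i (y i))) := by
        intro l hl
        have hl' : l ≠ y i := by simpa using hl
        have h1 : g i l = f i l := by
          rw [hg]; simp [hc, (Ne.symm hl' : ¬ y i = l)]
        have h2 : g i (y i) = f i (y i) + α := by rw [hg]; simp [hc]
        rw [h1, h2, hEb, show f i l - (f i (y i) + α) = (f i l - f i (y i)) + (-α) by ring,
          Real.exp_add]
        ring
      rw [Finset.sum_congr rfl hstep, ← Finset.mul_sum, ← hL]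
      simp [hAi, hBi, hc]
    · have hstep : ∀ l ∈ Finset.univ.filter (fun l => l ≠ y i),
          w i * Real.exp (g i l - g i (y i))
            = w i * Real.exp (f i l - f i (y i))
              + (if l = h i then (Ea - 1) * (w i * Real.exp (f i l - f i (y i))) else 0) := by
        intro l hl
        have h2 : g i (y i) = f i (y i) := by
          rw [hg]; simp [hc]
        by_cases hlh : l = h i
        · have h1 : g i l = f i l + α := by rw [hg]; simp [hlh]
          rw [h1, h2, if_pos hlh,
            show f i l + α - f i (y i) = (f i l - f i (y i)) + α by ring, Real.exp_add]
          rw [hEa]; ring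
        · have h1 : g i l = f i l := by
            rw [hg, if_neg (fun hh => hlh hh.symm), mul_zero, add_zero]
          rw [h1, h2, if_neg hlh, add_zero]
      rw [Finset.sum_congr rfl hstep, Finset.sum_add_distrib,
        Finset.sum_ite_eq' _ (h i) (fun l => (Ea - 1) * (w i * Real.exp (f i l - f i (y i)))),
        if_pos (by simp [hc]), ← hL]
      simp only [hAi, hBi, if_neg hc]
      ring
  -- totals
  set A : ℝ := ∑ i, Ai i with hA
  set B : ℝ := ∑ i, Bi i with hB
  set Ltot : ℝ := ∑ i, L i with hLtot
  have hA_nonneg : 0 ≤ A := Finset.sum_nonneg fun i _ => by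
    by_cases hc : h i = y i <;> simp [hAi, hc, hL_nonneg i]
  have hB_nonneg : 0 ≤ B := Finset.sum_nonneg fun i _ => by
    by_cases hc : h i = y i <;>
      simp [hBi, hc, mul_nonneg (hw_nonneg i) (Real.exp_pos _).le]
  have hABL : A + B ≤ Ltot := by
    rw [hA, hB, hLtot, ← Finset.sum_add_distrib]
    exact Finset.sum_le_sum fun i _ => hAB_le i
  have hLtot_nonneg : 0 ≤ Ltot := Finset.sum_nonneg fun i _ => hL_nonneg i
  -- simplify edge condition
  have hDsum : ∀ i, ∑ l, D i l = 0 := by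
    intro i
    rw [← Finset.add_sum_erase _ (D i) (Finset.mem_univ (y i)), hD]
    rw [if_pos rfl]
    have : ∑ l ∈ Finset.univ.erase (y i), D i l
        = ∑ l ∈ Finset.univ.filter (fun l => l ≠ y i),
            w i * Real.exp (f i l - f i (y i)) := by
      rw [Finset.filter_ne']
      exact Finset.sum_congr rfl fun l hl => by
        rw [hD, if_neg (Finset.ne_of_mem_erase hl)]
    rw [this, ← hL]; ring
  have hDy : ∀ i, D i (y i) = -(L i) := fun i => by rw [hD, if_pos rfl]
  have hlhs : (∑ i, ∑ l, D i l * (if h i = l then (1:ℝ) else 0)) = B - A := by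
    have key : ∀ i, (∑ l, D i l * (if h i = l then (1:ℝ) else 0)) = Bi i - Ai i := by
      intro i
      have e1 : ∀ l, D i l * (if h i = l then (1:ℝ) else 0)
          = if h i = l then D i l else 0 := by
        intro l; split <;> simp
      rw [Finset.sum_congr rfl fun l _ => e1 l,
        Finset.sum_ite_eq _ (h i) (fun l => D i l), if_pos (Finset.mem_univ _)]
      by_cases hc : h i = y i
      · rw [hc, hDy]; simp [hAi, hBi, hc]
      · rw [hD, if_neg hc]; simp [hAi, hBi, hc]
    rw [Finset.sum_congr rfl fun i _ => key i, hA, hB, ← Finset.sum_sub_distrib]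
  have hrhs : (∑ i, ∑ l, D i l * ((1 - δ) / K + if l = y i then δ else 0))
      = -(δ * Ltot) := by
    have : ∀ i, (∑ l, D i l * ((1 - δ) / K + if l = y i then δ else 0))
        = -(δ * L i) := by
      intro i
      have e1 : ∀ l, D i l * ((1 - δ) / K + if l = y i then δ else 0)
          = D i l * ((1 - δ) / K) + (if l = y i then D i l * δ else 0) := by
        intro l; split <;> ring
      rw [Finset.sum_congr rfl fun l _ => e1 l, Finset.sum_add_distrib,
        ← Finset.sum_mul, hDsum i, zero_mul, zero_add,
        Finset.sum_ite_eq' _ (y i) (fun l => D i l * δ), if_pos (Finset.mem_univ _),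
        hDy]
      ring
    rw [Finset.sum_congr rfl fun i _ => this i, hLtot, Finset.mul_sum]
    rw [← Finset.sum_neg_distrib]
  have hedge' : B - A ≤ -(δ * Ltot) := by
    rw [← hlhs, ← hrhs]; exact hedge
  -- put it together
  rw [Finset.sum_congr rfl fun i _ => hT i]
  have hsplit : (∑ i, (Eb * Ai i + Ea * Bi i + (L i - Ai i - Bi i)))
      = Eb * A + Ea * B + (Ltot - A - B) := by
    rw [hA, hB, hLtot]
    simp [Finset.sum_add_distrib, Finset.sum_sub_distrib, Finset.mul_sum]
  rw [hsplit]
  nlinarith [mul_nonneg (by linarith : (0:ℝ) ≤ Ea + Eb - 2) (by linarith : (0:ℝ) ≤ Ltot - (A + B)),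
    mul_nonneg (by nlinarith : (0:ℝ) ≤ Ea - Eb) (by linarith : (0:ℝ) ≤ (A - B) - δ * Ltot)]
end

section
/- Combining the bounds: the squared operator norm of the empirical error-focused confusion matrix of the final boosted hypothesis satisfies ‖C_S‖² ≤ K(K−1)·Π_{t=1}^T √(1−δ_t²), under the weak learning edge conditions with edges δ_t at each round. -/
open Finset

open Finset


lemma opnorm_sq_le {K : ℕ} (C : Matrix (Fin K) (Fin K) ℝ) :
    ‖Matrix.toEuclideanCLM (𝕜 := ℝ) C‖ ^ 2 ≤ ∑ l, ∑ j, C l j ^ 2 := by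
  have hX : (0:ℝ) ≤ ∑ l, ∑ j, C l j ^ 2 := by positivity
  have hb : ‖Matrix.toEuclideanCLM (𝕜 := ℝ) C‖ ≤ Real.sqrt (∑ l, ∑ j, C l j ^ 2) := by
    apply ContinuousLinearMap.opNorm_le_bound _ (Real.sqrt_nonneg _)
    intro x
    have happ : ∀ l, (Matrix.toEuclideanCLM (𝕜 := ℝ) C x) l = ∑ j, C l j * x j := by
      intro l
      rfl
    rw [EuclideanSpace.norm_eq, EuclideanSpace.norm_eq]
    rw [← Real.sqrt_mul hX]
    apply Real.sqrt_le_sqrt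
    simp only [happ, Real.norm_eq_abs, sq_abs]
    calc ∑ l, (∑ j, C l j * x j) ^ 2
        ≤ ∑ l, (∑ j, C l j ^ 2) * (∑ j, x j ^ 2) := by
          apply Finset.sum_le_sum
          intro l _
          exact Finset.sum_mul_sq_le_sq_mul_sq _ _ _
      _ = (∑ l, ∑ j, C l j ^ 2) * ∑ j, x j ^ 2 := by rw [Finset.sum_mul]
  calc ‖Matrix.toEuclideanCLM (𝕜 := ℝ) C‖ ^ 2
      ≤ Real.sqrt (∑ l, ∑ j, C l j ^ 2) ^ 2 := by
        exact pow_le_pow_left₀ (norm_nonneg _) hb 2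
    _ = _ := Real.sq_sqrt hX


set_option maxHeartbeats 1000000 in
lemma round_bound {m K : ℕ} (y ht : Fin m → Fin K) (δ αt : ℝ)
    (hδ0 : 0 ≤ δ) (hδ1 : δ < 1) (hαt : αt = (1/2) * Real.log ((1 + δ) / (1 - δ)))
    (c : Fin m → Fin K → ℝ) (hc0 : ∀ i j, 0 ≤ c i j)
    (hedge : (∑ i, ∑ l, (if l = y i then
          -(∑ j ∈ Finset.univ.filter (fun j => j ≠ y i), c i j)
        else c i l) * (if ht i = l then (1:ℝ) else 0)) ≤
      ∑ i, ∑ l, (if l = y i then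
          -(∑ j ∈ Finset.univ.filter (fun j => j ≠ y i), c i j)
        else c i l) * ((1 - δ) / K + if l = y i then δ else 0)) :
    (∑ i, ∑ j ∈ Finset.univ.filter (fun j => j ≠ y i),
        c i j * Real.exp (αt * ((if ht i = j then (1:ℝ) else 0)
          - (if ht i = y i then (1:ℝ) else 0)))) ≤
      Real.sqrt (1 - δ ^ 2) * ∑ i, ∑ j ∈ Finset.univ.filter (fun j => j ≠ y i), c i j := by
  classical
  set u := Real.exp αt with hu
  set iu := Real.exp (-αt) with hiu
  set s := Real.sqrt (1 - δ ^ 2) with hs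
  set A : Fin m → ℝ := fun i => ∑ j ∈ Finset.univ.filter (fun j => j ≠ y i), c i j with hA
  set Lsum := ∑ i, A i with hLsum
  set Aerr := ∑ i, (if ht i = y i then 0 else A i) with hAerr
  set E := ∑ i, ∑ j ∈ Finset.univ.filter (fun j => j ≠ y i),
      (if ht i = j then c i j else 0) with hE
  have h1δ : (0:ℝ) < 1 - δ := by linarith
  have h1δ' : (0:ℝ) < 1 + δ := by linarith
  have hupos : (0:ℝ) < u := Real.exp_pos _
  have hu2 : u ^ 2 = (1 + δ) / (1 - δ) := by
    rw [hu, ← Real.exp_nat_mul, hαt,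
      show ((2:ℕ):ℝ) * ((1/2) * Real.log ((1 + δ) / (1 - δ)))
        = Real.log ((1 + δ) / (1 - δ)) by push_cast; ring]
    exact Real.exp_log (by positivity)
  have hiumul : u * iu = 1 := by rw [hu, hiu, ← Real.exp_add]; simp
  have hu1 : 1 ≤ u := by
    rw [hu]
    apply Real.one_le_exp
    rw [hαt]
    have h1 : (1:ℝ) ≤ (1 + δ) / (1 - δ) := by
      rw [le_div_iff₀ h1δ]; linarith
    have := Real.log_nonneg h1
    linarith
  have key1 : u * (1 - δ) = s := by
    rw [hs, show (1:ℝ) - δ ^ 2 = (u * (1 - δ)) ^ 2 by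
      rw [mul_pow, hu2]; field_simp; ring]
    rw [Real.sqrt_sq (by positivity)]
  have key2 : u * s = 1 + δ := by
    calc u * s = u ^ 2 * (1 - δ) := by rw [← key1]; ring
    _ = 1 + δ := by rw [hu2]; field_simp
  -- nonnegativity facts
  have hA0 : ∀ i, 0 ≤ A i := fun i => Finset.sum_nonneg fun j _ => hc0 i j
  have hL0 : 0 ≤ Lsum := Finset.sum_nonneg fun i _ => hA0 i
  have hE0 : 0 ≤ E := Finset.sum_nonneg fun i _ =>
    Finset.sum_nonneg fun j _ => by by_cases hh : ht i = j <;> simp [hh, hc0]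
  have hAe0 : 0 ≤ Aerr := Finset.sum_nonneg fun i _ => by
    by_cases hh : ht i = y i <;> simp [hh, hA0]
  have hAeL : Aerr ≤ Lsum := Finset.sum_le_sum fun i _ => by
    by_cases hh : ht i = y i <;> simp [hh, hA0]
  have hEAe : E ≤ Aerr := by
    apply Finset.sum_le_sum
    intro i _
    by_cases hh : ht i = y i
    · have : ∀ j ∈ Finset.univ.filter (fun j => j ≠ y i),
          (if ht i = j then c i j else 0) = 0 := by
        intro j hj
        simp only [Finset.mem_filter] at hj
        rw [if_neg (by rw [hh]; exact Ne.symm hj.2)]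
      rw [Finset.sum_congr rfl this]
      simp [hh]
    · rw [if_neg hh]
      exact Finset.sum_le_sum fun j _ => by
        by_cases h2 : ht i = j <;> simp [h2, hc0]
  -- the inner sum of E computed
  have hEinner : ∀ i, (∑ j ∈ Finset.univ.filter (fun j => j ≠ y i),
      (if ht i = j then c i j else 0)) = (if ht i = y i then 0 else c i (ht i)) := by
    intro i
    rw [Finset.sum_ite_eq]
    by_cases hh : ht i = y i <;> simp [hh]
  -- simplify the edge hypothesis
  have hedgeL : (∑ i, ∑ l, (if l = y i then -A i else c i l) * (if ht i = l then (1:ℝ) else 0))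
      = E - (Lsum - Aerr) := by
    have hterm : ∀ i, (∑ l, (if l = y i then -A i else c i l) * (if ht i = l then (1:ℝ) else 0))
        = (if ht i = y i then 0 else c i (ht i)) - (if ht i = y i then A i else 0) := by
      intro i
      rw [show (∑ l, (if l = y i then -A i else c i l) * (if ht i = l then (1:ℝ) else 0))
          = ∑ l, (if ht i = l then (if l = y i then -A i else c i l) else 0) by
        apply Finset.sum_congr rfl; intro l _; by_cases hh : ht i = l <;> simp [hh]]
      rw [Finset.sum_ite_eq]
      by_cases hh : ht i = y i <;> simp [hh]
    rw [Finset.sum_congr rfl (fun i _ => hterm i), Finset.sum_sub_distrib]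
    have : (∑ i, (if ht i = y i then A i else 0)) = Lsum - Aerr := by
      rw [hLsum, hAerr, ← Finset.sum_sub_distrib]
      apply Finset.sum_congr rfl
      intro i _
      by_cases hh : ht i = y i <;> simp [hh]
    rw [this, hE]
    congr 1
    exact Finset.sum_congr rfl fun i _ => (hEinner i).symm
  have hedgeR : (∑ i, ∑ l, (if l = y i then -A i else c i l) *
      ((1 - δ) / K + if l = y i then δ else 0)) = -δ * Lsum := by
    have hterm : ∀ i, (∑ l, (if l = y i then -A i else c i l) *
        ((1 - δ) / K + if l = y i then δ else 0)) = -(δ * A i) := by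
      intro i
      have hzero : (∑ l, (if l = y i then -A i else c i l)) = 0 := by
        rw [← Finset.add_sum_erase _ _ (Finset.mem_univ (y i))]
        rw [if_pos rfl]
        have : (∑ l ∈ Finset.univ.erase (y i), (if l = y i then -A i else c i l))
            = ∑ l ∈ Finset.univ.erase (y i), c i l := by
          apply Finset.sum_congr rfl
          intro l hl
          rw [if_neg (Finset.ne_of_mem_erase hl)]
        rw [this, ← Finset.filter_ne']
        rw [hA]
        ring
      rw [show (∑ l, (if l = y i then -A i else c i l) *
          ((1 - δ) / K + if l = y i then δ else 0))
          = (1 - δ) / K * (∑ l, (if l = y i then -A i else c i l))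
            + ∑ l, (if l = y i then δ * (if l = y i then -A i else c i l) else 0) by
        rw [Finset.mul_sum, ← Finset.sum_add_distrib]
        apply Finset.sum_congr rfl
        intro l _
        by_cases hh : l = y i <;> simp [hh] <;> ring]
      rw [hzero, mul_zero, zero_add, Finset.sum_ite_eq']
      simp
    rw [Finset.sum_congr rfl (fun i _ => hterm i)]
    rw [hLsum, Finset.mul_sum]
    apply Finset.sum_congr rfl
    intro i _
    ring
  rw [hedgeL, hedgeR] at hedge
  have hkey : E + Aerr ≤ (1 - δ) * Lsum := by linarith
  -- expand the goal LHS
  have hfac : ∀ i, ∀ j ∈ Finset.univ.filter (fun j => j ≠ y i),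
      Real.exp (αt * ((if ht i = j then (1:ℝ) else 0) - (if ht i = y i then (1:ℝ) else 0)))
      = iu + (if ht i = y i then 0 else 1 - iu) + (if ht i = j then u - 1 else 0) := by
    intro i j hj
    simp only [Finset.mem_filter] at hj
    by_cases h1 : ht i = y i
    · have h2 : ht i ≠ j := by rw [h1]; exact Ne.symm hj.2
      rw [if_neg h2, if_pos h1, if_pos h1, if_neg h2]
      rw [show αt * ((0:ℝ) - 1) = -αt by ring, ← hiu]
      ring
    · by_cases h2 : ht i = j
      · rw [if_pos h2, if_neg h1, if_neg h1, if_pos h2]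
        rw [show αt * ((1:ℝ) - 0) = αt by ring, ← hu]
        ring
      · rw [if_neg h2, if_neg h1, if_neg h1, if_neg h2]
        rw [show αt * ((0:ℝ) - 0) = 0 by ring, Real.exp_zero]
        ring
  have e1 : iu * Lsum = ∑ i, ∑ j ∈ Finset.univ.filter (fun j => j ≠ y i), c i j * iu := by
    rw [hLsum, Finset.mul_sum]
    apply Finset.sum_congr rfl
    intro i _
    rw [hA]
    simp only
    rw [Finset.mul_sum]
    exact Finset.sum_congr rfl fun j _ => mul_comm _ _
  have e2 : (1 - iu) * Aerr = ∑ i, ∑ j ∈ Finset.univ.filter (fun j => j ≠ y i),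
      c i j * (if ht i = y i then 0 else 1 - iu) := by
    rw [hAerr, Finset.mul_sum]
    apply Finset.sum_congr rfl
    intro i _
    by_cases hh : ht i = y i
    · simp [hh]
    · rw [if_neg hh, hA]
      simp only [if_neg hh]
      rw [Finset.mul_sum]
      exact Finset.sum_congr rfl fun j _ => mul_comm _ _
  have e3 : (u - 1) * E = ∑ i, ∑ j ∈ Finset.univ.filter (fun j => j ≠ y i),
      (u - 1) * (if ht i = j then c i j else 0) := by
    rw [hE, Finset.mul_sum]
    exact Finset.sum_congr rfl fun i _ => Finset.mul_sum _ _ _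
  have hexpand : (∑ i, ∑ j ∈ Finset.univ.filter (fun j => j ≠ y i),
      c i j * Real.exp (αt * ((if ht i = j then (1:ℝ) else 0)
        - (if ht i = y i then (1:ℝ) else 0))))
      = iu * Lsum + (1 - iu) * Aerr + (u - 1) * E := by
    rw [e1, e2, e3]
    rw [← Finset.sum_add_distrib, ← Finset.sum_add_distrib]
    apply Finset.sum_congr rfl
    intro i _
    rw [← Finset.sum_add_distrib, ← Finset.sum_add_distrib]
    apply Finset.sum_congr rfl
    intro j hj
    rw [hfac i j hj]
    have hyj : ¬ (y i = j) := by
      simp only [Finset.mem_filter] at hj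
      exact fun hh => hj.2 hh.symm
    by_cases h2 : ht i = j <;> by_cases h1 : ht i = y i <;>
      simp only [h1, h2, if_true, if_false, ite_true, ite_false, if_neg hyj] <;> ring
  rw [hexpand]
  -- final algebra
  have p1 : 0 ≤ (u - 1) ^ 2 / 2 * (Aerr - E) :=
    mul_nonneg (by positivity) (by linarith)
  have p2 : 0 ≤ (u ^ 2 - 1) / 2 * ((1 - δ) * Lsum - Aerr - E) := by
    apply mul_nonneg
    · nlinarith
    · linarith
  have hfinal : δ * Lsum - ((u - 1) * Aerr + (u ^ 2 - u) * E)
      = (u - 1) ^ 2 / 2 * (Aerr - E) + (u ^ 2 - 1) / 2 * ((1 - δ) * Lsum - Aerr - E)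
        + ((1 + δ) - u ^ 2 * (1 - δ)) / 2 * Lsum := by ring
  have hq : u ^ 2 * (1 - δ) = 1 + δ := by
    rw [hu2]; field_simp
  rw [hq] at hfinal
  have hmain : (u - 1) * Aerr + (u ^ 2 - u) * E ≤ δ * Lsum := by
    linarith [p1, p2, hfinal]
  have hmul : u * (iu * Lsum + (1 - iu) * Aerr + (u - 1) * E) ≤ u * (s * Lsum) := by
    have e4 : u * (iu * Lsum + (1 - iu) * Aerr + (u - 1) * E)
        = Lsum + (u - 1) * Aerr + (u ^ 2 - u) * E := by
      linear_combination (Lsum - Aerr) * hiumul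
    have e5 : u * (s * Lsum) = (1 + δ) * Lsum := by
      linear_combination Lsum * key2
    rw [e4, e5]
    linarith
  exact le_of_mul_le_mul_left hmul hupos


def gAux {m K T : ℕ} (h : Fin T → Fin m → Fin K) (α : Fin T → ℝ)
    (n : ℕ) (i : Fin m) (l : Fin K) : ℝ :=
  ∑ s ∈ Finset.univ.filter (fun s : Fin T => (s:ℕ) < n), α s * (if h s i = l then (1:ℝ) else 0)

lemma gAux_zero {m K T : ℕ} (h : Fin T → Fin m → Fin K) (α : Fin T → ℝ)
    (i : Fin m) (l : Fin K) : gAux h α 0 i l = 0 := by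
  simp [gAux]

lemma gAux_succ {m K T : ℕ} (h : Fin T → Fin m → Fin K) (α : Fin T → ℝ)
    (t : Fin T) (i : Fin m) (l : Fin K) :
    gAux h α ((t:ℕ)+1) i l = gAux h α (t:ℕ) i l + α t * (if h t i = l then (1:ℝ) else 0) := by
  rw [gAux, gAux]
  have hfil : Finset.univ.filter (fun s : Fin T => (s:ℕ) < (t:ℕ)+1)
      = insert t (Finset.univ.filter (fun s : Fin T => (s:ℕ) < (t:ℕ))) := by
    ext s
    simp [Nat.lt_succ_iff_lt_or_eq, Fin.ext_iff, or_comm]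
    simp only [Fin.le_iff_val_le_val, Fin.lt_iff_val_lt_val]; omega
  rw [hfil, Finset.sum_insert (by simp)]
  ring

noncomputable def LAux {m K T : ℕ} (y : Fin m → Fin K) (h : Fin T → Fin m → Fin K) (α : Fin T → ℝ)
    (w : Fin m → ℝ) (n : ℕ) : ℝ :=
  ∑ i, ∑ j ∈ Finset.univ.filter (fun j => j ≠ y i),
    w i * Real.exp (gAux h α n i j - gAux h α n i (y i))

set_option maxHeartbeats 1000000

/-- Combining the bounds: under the per-round weak learning edge
conditions, the squared operator norm of the empirical error-focused confusion matrix
of the final boosted hypothesis satisfies ‖C_S‖² ≤ K(K−1)·Π_t √(1−δ_t²). -/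
theorem stmt_15 {m K T : ℕ}
    (y : Fin m → Fin K) (hfull : ∀ l : Fin K, ∃ i, y i = l)
    (h : Fin T → Fin m → Fin K) (δ α : Fin T → ℝ)
    (hδ : ∀ t, δ t ∈ Set.Ico (0:ℝ) 1)
    (hα : ∀ t, α t = (1/2) * Real.log ((1 + δ t) / (1 - δ t)))
    (w : Fin m → ℝ)
    (hw : ∀ i, w i = 1 / ((Finset.univ.filter (fun i' => y i' = y i)).card : ℝ))
    (f : Fin T → Fin m → Fin K → ℝ)
    (hf : ∀ t i l, f t i l = ∑ s ∈ Finset.univ.filter (fun s => s < t),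
        α s * (if h s i = l then (1:ℝ) else 0))
    (hedge : ∀ t : Fin T,
      (∑ i, ∑ l, (if l = y i then
          -(∑ j ∈ Finset.univ.filter (fun j => j ≠ y i),
              w i * Real.exp (f t i j - f t i (y i)))
        else w i * Real.exp (f t i l - f t i (y i))) * (if h t i = l then (1:ℝ) else 0)) ≤
      ∑ i, ∑ l, (if l = y i then
          -(∑ j ∈ Finset.univ.filter (fun j => j ≠ y i),
              w i * Real.exp (f t i j - f t i (y i)))
        else w i * Real.exp (f t i l - f t i (y i))) *
          ((1 - δ t) / K + if l = y i then δ t else 0))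
    (F : Fin m → Fin K → ℝ)
    (hF : ∀ i l, F i l = ∑ t, α t * (if h t i = l then (1:ℝ) else 0))
    (H : Fin m → Fin K) (hHmax : ∀ i l, F i l ≤ F i (H i))
    (C : Matrix (Fin K) (Fin K) ℝ)
    (hCdiag : ∀ l, C l l = 0)
    (hCoff : ∀ l j, l ≠ j → C l j =
      (1 / ((Finset.univ.filter (fun i => y i = l)).card : ℝ)) *
        ∑ i, (if H i = j then (1:ℝ) else 0) * (if y i = l then 1 else 0)) :
    ‖Matrix.toEuclideanCLM (𝕜 := ℝ) C‖ ^ 2 ≤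
      (K:ℝ) * ((K:ℝ) - 1) * ∏ t, Real.sqrt (1 - δ t ^ 2) := by
  classical
  have hprodnn : (0:ℝ) ≤ ∏ t, Real.sqrt (1 - δ t ^ 2) :=
    Finset.prod_nonneg fun t _ => Real.sqrt_nonneg _
  rcases Nat.eq_zero_or_pos K with hK0 | hKpos
  · subst hK0
    have hC0 : Matrix.toEuclideanCLM (𝕜 := ℝ) C = 0 := Subsingleton.elim _ _
    rw [hC0, norm_zero]
    rw [show ((0:ℕ):ℝ) * (((0:ℕ):ℝ) - 1) * ∏ t, Real.sqrt (1 - δ t ^ 2) = 0 by push_cast; ring]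
    norm_num
  -- K ≥ 1
  have hm : ∀ l : Fin K, 0 < (Finset.univ.filter (fun i => y i = l)).card := by
    intro l
    obtain ⟨i, hi⟩ := hfull l
    exact Finset.card_pos.2 ⟨i, Finset.mem_filter.2 ⟨Finset.mem_univ _, hi⟩⟩
  have hw0 : ∀ i, 0 ≤ w i := fun i => by rw [hw]; positivity
  have hwsum : (∑ i, w i) = K := by
    rw [← Finset.sum_fiberwise Finset.univ y w]
    have hone : ∀ l : Fin K, (∑ i ∈ Finset.univ.filter (fun i => y i = l), w i) = 1 := by
      intro l
      have hww : ∀ i ∈ Finset.univ.filter (fun i => y i = l),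
          w i = 1 / ((Finset.univ.filter (fun i => y i = l)).card : ℝ) := by
        intro i hi
        simp only [Finset.mem_filter] at hi
        rw [hw, hi.2]
      rw [Finset.sum_congr rfl hww, Finset.sum_const, nsmul_eq_mul, mul_one_div, div_self]
      exact_mod_cast (hm l).ne'
    rw [Finset.sum_congr rfl fun l _ => hone l, Finset.sum_const, nsmul_eq_mul, mul_one,
      Finset.card_univ, Fintype.card_fin]
  have hft : ∀ (t : Fin T) i l, f t i l = gAux h α (t:ℕ) i l := by
    intro t i l
    rw [hf, gAux]
    apply Finset.sum_congr _ fun s _ => rfl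
    ext s
    simp only [Finset.mem_filter, Finset.mem_univ, true_and, Fin.lt_def]
  have hcard1 : ∀ i : Fin m, (((Finset.univ.filter (fun j => j ≠ y i)).card : ℕ) : ℝ)
      = (K:ℝ) - 1 := by
    intro i
    rw [Finset.filter_ne', Finset.card_erase_of_mem (Finset.mem_univ _), Finset.card_univ,
      Fintype.card_fin, Nat.cast_sub hKpos, Nat.cast_one]
  have hL0 : LAux y h α w 0 = (K:ℝ) * ((K:ℝ) - 1) := by
    rw [LAux]
    have : ∀ i : Fin m, (∑ j ∈ Finset.univ.filter (fun j => j ≠ y i),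
        w i * Real.exp (gAux h α 0 i j - gAux h α 0 i (y i))) = ((K:ℝ) - 1) * w i := by
      intro i
      simp only [gAux_zero, sub_zero, Real.exp_zero, mul_one]
      rw [Finset.sum_const, nsmul_eq_mul, hcard1]
    rw [Finset.sum_congr rfl fun i _ => this i, ← Finset.mul_sum, hwsum]
    ring
  have hstep : ∀ t : Fin T,
      LAux y h α w ((t:ℕ)+1) ≤ Real.sqrt (1 - δ t ^ 2) * LAux y h α w (t:ℕ) := by
    intro t
    have hc0 : ∀ i j, 0 ≤ w i * Real.exp (gAux h α (t:ℕ) i j - gAux h α (t:ℕ) i (y i)) :=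
      fun i j => mul_nonneg (hw0 i) (Real.exp_pos _).le
    have He := hedge t
    simp only [hft] at He
    have hrb := round_bound y (h t) (δ t) (α t) (hδ t).1 (hδ t).2 (hα t)
      (fun i j => w i * Real.exp (gAux h α (t:ℕ) i j - gAux h α (t:ℕ) i (y i))) hc0 He
    have hL1 : LAux y h α w ((t:ℕ)+1) = ∑ i, ∑ j ∈ Finset.univ.filter (fun j => j ≠ y i),
        (w i * Real.exp (gAux h α (t:ℕ) i j - gAux h α (t:ℕ) i (y i))) *
          Real.exp (α t * ((if h t i = j then (1:ℝ) else 0)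
            - (if h t i = y i then (1:ℝ) else 0))) := by
      rw [LAux]
      apply Finset.sum_congr rfl; intro i _
      apply Finset.sum_congr rfl; intro j _
      rw [gAux_succ, gAux_succ]
      rw [show (gAux h α (t:ℕ) i j + α t * (if h t i = j then (1:ℝ) else 0))
          - (gAux h α (t:ℕ) i (y i) + α t * (if h t i = y i then (1:ℝ) else 0))
          = (gAux h α (t:ℕ) i j - gAux h α (t:ℕ) i (y i))
            + α t * ((if h t i = j then (1:ℝ) else 0)
              - (if h t i = y i then (1:ℝ) else 0)) from by ring]
      rw [Real.exp_add, mul_assoc]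
    rw [hL1, LAux]
    exact hrb
  have hind : ∀ n, n ≤ T → LAux y h α w n ≤ (K:ℝ) * ((K:ℝ) - 1) *
      ∏ t ∈ Finset.univ.filter (fun t : Fin T => (t:ℕ) < n), Real.sqrt (1 - δ t ^ 2) := by
    intro n
    induction n with
    | zero =>
      intro _
      rw [hL0]
      simp
    | succ n ih =>
      intro hn
      have hnT : n < T := hn
      have hfil : Finset.univ.filter (fun s : Fin T => (s:ℕ) < n+1)
          = insert (⟨n, hnT⟩ : Fin T) (Finset.univ.filter (fun s : Fin T => (s:ℕ) < n)) := by
        ext s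
        simp [Nat.lt_succ_iff_lt_or_eq, Fin.ext_iff, or_comm]
        omega
      calc LAux y h α w (n+1)
          ≤ Real.sqrt (1 - δ (⟨n, hnT⟩ : Fin T) ^ 2) * LAux y h α w n := hstep ⟨n, hnT⟩
        _ ≤ Real.sqrt (1 - δ (⟨n, hnT⟩ : Fin T) ^ 2) * ((K:ℝ) * ((K:ℝ) - 1) *
            ∏ t ∈ Finset.univ.filter (fun t : Fin T => (t:ℕ) < n), Real.sqrt (1 - δ t ^ 2)) :=
          mul_le_mul_of_nonneg_left (ih (le_of_lt hnT)) (Real.sqrt_nonneg _)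
        _ = (K:ℝ) * ((K:ℝ) - 1) *
            ∏ t ∈ Finset.univ.filter (fun t : Fin T => (t:ℕ) < n+1), Real.sqrt (1 - δ t ^ 2) := by
          rw [hfil, Finset.prod_insert (by simp)]
          ring
  have hLT : LAux y h α w T ≤ (K:ℝ) * ((K:ℝ) - 1) * ∏ t, Real.sqrt (1 - δ t ^ 2) := by
    have hh := hind T le_rfl
    rwa [show Finset.univ.filter (fun t : Fin T => (t:ℕ) < T) = Finset.univ from by
      ext s; simp [s.isLt]] at hh
  have hFg : ∀ i l, F i l = gAux h α T i l := by
    intro i l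
    rw [hF, gAux, Finset.filter_true_of_mem (fun s _ => s.isLt)]
  have hmis : (∑ i, ∑ j ∈ Finset.univ.filter (fun j => j ≠ y i),
      w i * (if H i = j then (1:ℝ) else 0)) ≤ LAux y h α w T := by
    rw [LAux]
    apply Finset.sum_le_sum; intro i _
    apply Finset.sum_le_sum; intro j _
    by_cases hHj : H i = j
    · rw [if_pos hHj, mul_one]
      have hmax := hHmax i (y i)
      rw [hHj] at hmax
      rw [hFg, hFg] at hmax
      have hexp1 : (1:ℝ) ≤ Real.exp (gAux h α T i j - gAux h α T i (y i)) :=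
        Real.one_le_exp (by linarith)
      exact le_mul_of_one_le_right (hw0 i) hexp1
    · rw [if_neg hHj, mul_zero]
      exact mul_nonneg (hw0 i) (Real.exp_pos _).le
  -- confusion matrix bounds
  have hC01 : ∀ l j, j ≠ l → 0 ≤ C l j ∧ C l j ≤ 1 := by
    intro l j hj
    rw [hCoff l j (Ne.symm hj)]
    have hS0 : (0:ℝ) ≤ ∑ i, (if H i = j then (1:ℝ) else 0) * (if y i = l then 1 else 0) :=
      Finset.sum_nonneg fun i _ => by
        by_cases h1 : H i = j <;> by_cases h2 : y i = l <;> simp [h1, h2]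
    have hSle : (∑ i, (if H i = j then (1:ℝ) else 0) * (if y i = l then 1 else 0))
        ≤ ((Finset.univ.filter (fun i => y i = l)).card : ℝ) := by
      calc (∑ i, (if H i = j then (1:ℝ) else 0) * (if y i = l then 1 else 0))
          ≤ ∑ i, (if y i = l then (1:ℝ) else 0) := Finset.sum_le_sum fun i _ => by
            by_cases h1 : H i = j <;> by_cases h2 : y i = l <;> simp [h1, h2]
        _ = ((Finset.univ.filter (fun i => y i = l)).card : ℝ) := by
            rw [Finset.sum_boole]
    have hcp : (0:ℝ) < ((Finset.univ.filter (fun i => y i = l)).card : ℝ) := by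
      exact_mod_cast hm l
    constructor
    · exact mul_nonneg (by positivity) hS0
    · calc (1 / ((Finset.univ.filter (fun i => y i = l)).card : ℝ)) *
          ∑ i, (if H i = j then (1:ℝ) else 0) * (if y i = l then 1 else 0)
          ≤ (1 / ((Finset.univ.filter (fun i => y i = l)).card : ℝ)) *
            ((Finset.univ.filter (fun i => y i = l)).card : ℝ) :=
            mul_le_mul_of_nonneg_left hSle (by positivity)
        _ = 1 := by field_simp
  have hAeq : (∑ l, ∑ j ∈ Finset.univ.filter (fun j => j ≠ l), C l j)
      = ∑ i, ∑ j ∈ Finset.univ.filter (fun j => j ≠ y i),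
          w i * (if H i = j then (1:ℝ) else 0) := by
    have step1 : (∑ l, ∑ j ∈ Finset.univ.filter (fun j => j ≠ l), C l j)
        = ∑ l, ∑ j ∈ Finset.univ.filter (fun j => j ≠ l), ∑ i,
            (1 / ((Finset.univ.filter (fun i => y i = l)).card : ℝ)) *
              ((if H i = j then (1:ℝ) else 0) * (if y i = l then 1 else 0)) := by
      apply Finset.sum_congr rfl; intro l _
      apply Finset.sum_congr rfl; intro j hj
      simp only [Finset.mem_filter] at hj
      rw [hCoff l j (Ne.symm hj.2), Finset.mul_sum]
    rw [step1]
    rw [show (∑ l, ∑ j ∈ Finset.univ.filter (fun j => j ≠ l), ∑ i,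
        (1 / ((Finset.univ.filter (fun i => y i = l)).card : ℝ)) *
          ((if H i = j then (1:ℝ) else 0) * (if y i = l then 1 else 0)))
        = ∑ i, ∑ l, ∑ j ∈ Finset.univ.filter (fun j => j ≠ l),
          (1 / ((Finset.univ.filter (fun i => y i = l)).card : ℝ)) *
            ((if H i = j then (1:ℝ) else 0) * (if y i = l then 1 else 0)) from by
      rw [Finset.sum_comm]
      apply Finset.sum_congr rfl; intro i _
      rw [Finset.sum_comm]]
    apply Finset.sum_congr rfl; intro i _
    have inner : ∀ l : Fin K, (∑ j ∈ Finset.univ.filter (fun j => j ≠ l),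
        (1 / ((Finset.univ.filter (fun i => y i = l)).card : ℝ)) *
          ((if H i = j then (1:ℝ) else 0) * (if y i = l then 1 else 0)))
        = (if y i = l then (∑ j ∈ Finset.univ.filter (fun j => j ≠ l),
            (1 / ((Finset.univ.filter (fun i => y i = l)).card : ℝ)) *
              (if H i = j then (1:ℝ) else 0)) else 0) := by
      intro l
      by_cases hyl : y i = l
      · simp only [if_pos hyl, mul_one]
      · simp [if_neg hyl]
    rw [Finset.sum_congr rfl fun l _ => inner l, Finset.sum_ite_eq]
    rw [if_pos (Finset.mem_univ _)]
    apply Finset.sum_congr rfl; intro j _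
    rw [← hw i]
  have hsq : (∑ l, ∑ j, C l j ^ 2) ≤ ∑ l, ∑ j ∈ Finset.univ.filter (fun j => j ≠ l), C l j := by
    apply Finset.sum_le_sum
    intro l _
    have hzero : (∑ j ∈ Finset.univ.filter (fun j => ¬ j ≠ l), C l j ^ 2) = 0 :=
      Finset.sum_eq_zero fun j hj => by
        simp only [Finset.mem_filter, not_not] at hj
        rw [hj.2, hCdiag]
        ring
    rw [← Finset.sum_filter_add_sum_filter_not Finset.univ (fun j => j ≠ l)
      (fun j => C l j ^ 2), hzero, add_zero]
    apply Finset.sum_le_sum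
    intro j hj
    simp only [Finset.mem_filter] at hj
    obtain ⟨h0, h1⟩ := hC01 l j hj.2
    nlinarith
  calc ‖Matrix.toEuclideanCLM (𝕜 := ℝ) C‖ ^ 2
      ≤ ∑ l, ∑ j, C l j ^ 2 := opnorm_sq_le C
    _ ≤ ∑ l, ∑ j ∈ Finset.univ.filter (fun j => j ≠ l), C l j := hsq
    _ = ∑ i, ∑ j ∈ Finset.univ.filter (fun j => j ≠ y i),
          w i * (if H i = j then (1:ℝ) else 0) := hAeq
    _ ≤ LAux y h α w T := hmis
    _ ≤ _ := hLT
end
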